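/- arXiv:1904.04251 — 2 statements merged into one kernel-verified Lean document; each statement's English description precedes it below -/
import Mathlib

section
/- Let M ∈ ℝ^{m×n} with rank(M) = r, and let W_k = v_k u_kᵀ (k = 1,…,r) be the rank-one matrices produced by the Wedderburn rank-reducing process applied to M, with intermediate matrices M₁ = M and M_{k+1} = M_k − W_k. Then for all j > k, v_k does not lie in the column space of M_j and u_k does not lie in the column space of M_jᵀ. -/
open Matrix

private lemma vecMul_vvm {m n : ℕ} (y v : Fin m → ℝ) (u : Fin n → ℝ) :
    Matrix.vecMul y (Matrix.vecMulVec v u) = (y ⬝ᵥ v) • u := by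
  funext j
  simp [Matrix.vecMul, Matrix.vecMulVec_apply, dotProduct, Finset.sum_mul, mul_assoc]

private lemma vvm_mulVec {m n : ℕ} (v : Fin m → ℝ) (u x : Fin n → ℝ) :
    Matrix.mulVec (Matrix.vecMulVec v u) x = (u ⬝ᵥ x) • v := by
  funext i
  simp [Matrix.mulVec, Matrix.vecMulVec_apply, dotProduct, Finset.mul_sum, mul_assoc,
    mul_comm, mul_left_comm]

private lemma vecMul_smulM {m n : ℕ} (y : Fin m → ℝ) (c : ℝ) (A : Matrix (Fin m) (Fin n) ℝ) :
    Matrix.vecMul y (c • A) = c • Matrix.vecMul y A := by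
  funext j
  simp [Matrix.vecMul, dotProduct, Finset.mul_sum, mul_comm, mul_left_comm]

private lemma smulM_mulVec {m n : ℕ} (c : ℝ) (A : Matrix (Fin m) (Fin n) ℝ) (x : Fin n → ℝ) :
    Matrix.mulVec (c • A) x = c • Matrix.mulVec A x := by
  funext i
  simp [Matrix.mulVec, dotProduct, Finset.mul_sum, mul_assoc]

theorem stmt16 {m n : ℕ} (M : Matrix (Fin m) (Fin n) ℝ) (r : ℕ)
    (hr : M.rank = r)
    (Ms : Fin (r + 1) → Matrix (Fin m) (Fin n) ℝ)
    (x : Fin r → Fin n → ℝ) (y : Fin r → Fin m → ℝ)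
    (v : Fin r → Fin m → ℝ) (u : Fin r → Fin n → ℝ)
    (hM0 : Ms 0 = M)
    (hw : ∀ k : Fin r, y k ⬝ᵥ (Ms k.castSucc).mulVec (x k) ≠ 0)
    (hW : ∀ k : Fin r,
      Matrix.vecMulVec (v k) (u k) =
        (y k ⬝ᵥ (Ms k.castSucc).mulVec (x k))⁻¹ •
          Matrix.vecMulVec ((Ms k.castSucc).mulVec (x k)) ((Ms k.castSucc).vecMul (y k)))
    (hrec : ∀ k : Fin r,
      Ms k.succ = Ms k.castSucc - Matrix.vecMulVec (v k) (u k)) :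
    ∀ (k : Fin r) (j : Fin (r + 1)), (k : ℕ) < (j : ℕ) →
      v k ∉ Set.range (Ms j).mulVec ∧ u k ∉ Set.range (Ms j).vecMul := by
  intro k
  -- key induction: for all j > k, y_k annihilates Ms j on the left and x_k on the right
  have key : ∀ (j : ℕ) (hj : j < r + 1), (k : ℕ) < j →
      Matrix.vecMul (y k) (Ms ⟨j, hj⟩) = 0 ∧ Matrix.mulVec (Ms ⟨j, hj⟩) (x k) = 0 := by
    intro j
    induction j with
    | zero => intro hj hk; omega
    | succ j ih =>
      intro hj hk
      have hjr : j < r := by omega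
      have hsucc : (⟨j + 1, hj⟩ : Fin (r + 1)) = (⟨j, hjr⟩ : Fin r).succ := rfl
      have hcast : (⟨j, hjr⟩ : Fin r).castSucc = (⟨j, by omega⟩ : Fin (r + 1)) := rfl
      rcases Nat.lt_or_ge (k : ℕ) j with hkj | hkj
      · -- inductive step : y_k Ms j = 0 already
        obtain ⟨ih1, ih2⟩ := ih (by omega) hkj
        rw [hsucc, hrec ⟨j, hjr⟩, hW ⟨j, hjr⟩]
        constructor
        · rw [Matrix.vecMul_sub, vecMul_smulM, vecMul_vvm]
          have h1 : y k ⬝ᵥ Matrix.mulVec (Ms (⟨j, hjr⟩ : Fin r).castSucc) (x ⟨j, hjr⟩) = 0 := by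
            rw [Matrix.dotProduct_mulVec, hcast, ih1, zero_dotProduct]
          rw [h1, hcast, ih1]
          simp
        · rw [Matrix.sub_mulVec, smulM_mulVec, vvm_mulVec]
          have h1 : Matrix.vecMul (y ⟨j, hjr⟩) (Ms (⟨j, hjr⟩ : Fin r).castSucc) ⬝ᵥ x k = 0 := by
            rw [← Matrix.dotProduct_mulVec, hcast, ih2, dotProduct_zero]
          rw [h1, hcast, ih2]
          simp
      · -- base case : j = k
        have hjk : (⟨j, hjr⟩ : Fin r) = k := by
          ext; simp; omega
        subst hjk
        rw [hsucc, hrec _, hW _]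
        constructor
        · rw [Matrix.vecMul_sub, vecMul_smulM, vecMul_vvm]
          rw [smul_smul, inv_mul_cancel₀ (hw _), one_smul, sub_self]
        · rw [Matrix.sub_mulVec, smulM_mulVec, vvm_mulVec]
          have h2 : Matrix.vecMul (y ⟨j, hjr⟩) (Ms (⟨j, hjr⟩ : Fin r).castSucc) ⬝ᵥ x ⟨j, hjr⟩
              = y ⟨j, hjr⟩ ⬝ᵥ (Ms (⟨j, hjr⟩ : Fin r).castSucc).mulVec (x ⟨j, hjr⟩) := by
            rw [← Matrix.dotProduct_mulVec]
          rw [h2, smul_smul, inv_mul_cancel₀ (hw _), one_smul, sub_self]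
  -- nonvanishing of y_k ⬝ v_k and u_k ⬝ x_k
  have hprod : (y k ⬝ᵥ v k) * (u k ⬝ᵥ x k) = y k ⬝ᵥ (Ms k.castSucc).mulVec (x k) := by
    have h := congrArg (fun A => y k ⬝ᵥ Matrix.mulVec A (x k)) (hW k)
    rw [vvm_mulVec, smulM_mulVec, vvm_mulVec] at h
    rw [dotProduct_smul, dotProduct_smul, dotProduct_smul] at h
    have h2 : Matrix.vecMul (y k) (Ms k.castSucc) ⬝ᵥ x k
        = y k ⬝ᵥ (Ms k.castSucc).mulVec (x k) := by
      rw [← Matrix.dotProduct_mulVec]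
    rw [h2] at h
    rw [mul_comm, ← smul_eq_mul, h, smul_smul, inv_mul_cancel₀ (hw k), one_smul]
  have hyv : y k ⬝ᵥ v k ≠ 0 := fun h0 => hw k (by rw [← hprod, h0, zero_mul])
  have hux : u k ⬝ᵥ x k ≠ 0 := fun h0 => hw k (by rw [← hprod, h0, mul_zero])
  intro j hkj
  obtain ⟨h1, h2⟩ := key (j : ℕ) j.isLt hkj
  have hj : (⟨(j : ℕ), j.isLt⟩ : Fin (r + 1)) = j := by ext; rfl
  rw [hj] at h1 h2
  constructor
  · rintro ⟨z, hz⟩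
    apply hyv
    rw [← hz, Matrix.dotProduct_mulVec, h1, zero_dotProduct]
  · rintro ⟨z, hz⟩
    apply hux
    rw [← hz, ← Matrix.dotProduct_mulVec, h2, dotProduct_zero]
end

section
/- Let C ∈ ℝ^{m×n} be of the form C = 𝟙ₘuᵀ + v𝟙ₙᵀ + Σᵢ rᵢcᵢᵀ where the matrix M = 𝟙ₘuᵀ + v𝟙ₙᵀ has rank 1. Then either 𝟙ₘ lies in the column space of C, or 𝟙ₙ lies in the column space of Cᵀ (or both). (Assume, as in the rank factorization, that the nonzero factors of M together with the rᵢ form linearly independent column vectors and likewise for the row factors.) -/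
open Matrix

private lemma exists_dual' {N K : ℕ} (w : Fin K → Fin N → ℝ)
    (hw : LinearIndependent ℝ w) (t : Fin K → ℝ) :
    ∃ x : Fin N → ℝ, ∀ i, w i ⬝ᵥ x = t i := by
  classical
  set W : Submodule ℝ (Fin N → ℝ) := Submodule.span ℝ (Set.range w)
  let B : Module.Basis (Fin K) ℝ W := Module.Basis.span hw
  let f : W →ₗ[ℝ] ℝ := B.constr ℝ t
  obtain ⟨g, hg⟩ := LinearMap.exists_extend f
  have hgw : ∀ i, g (w i) = t i := by
    intro i
    have hmem : w i ∈ W := Submodule.subset_span ⟨i, rfl⟩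
    have h1 : g (w i) = f ⟨w i, hmem⟩ := by
      have := congrFun (congrArg (fun h => h.toFun) hg) ⟨w i, hmem⟩
      simpa using this
    have h2 : (⟨w i, hmem⟩ : W) = B i := by
      apply Subtype.ext
      exact congrArg Subtype.val (Module.Basis.span_apply hw i).symm
    rw [h1, h2]
    simp [f, Module.Basis.constr_basis]
  set e : Fin N → Fin N → ℝ := fun j l => if j = l then (1 : ℝ) else 0 with he
  refine ⟨fun j => g (e j), fun i => ?_⟩
  have hrep : w i = ∑ j : Fin N, w i j • e j := by
    simpa [he] using pi_eq_sum_univ (w i)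
  have key : w i ⬝ᵥ (fun j => g (e j)) = g (∑ j : Fin N, w i j • e j) := by
    rw [map_sum]
    simp [dotProduct, smul_eq_mul, _root_.map_smul]
  rw [key, ← hrep, hgw]

private lemma sum_mulVec' {m n : ℕ} {ι : Type*} (s : Finset ι)
    (A : ι → Matrix (Fin m) (Fin n) ℝ) (x : Fin n → ℝ) :
    (∑ i ∈ s, A i).mulVec x = ∑ i ∈ s, (A i).mulVec x := by
  funext j
  simp only [Matrix.mulVec, dotProduct, Matrix.sum_apply, Finset.sum_apply, Finset.sum_mul]
  rw [Finset.sum_comm]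

private lemma sum_vecMul' {m n : ℕ} {ι : Type*} (s : Finset ι)
    (A : ι → Matrix (Fin m) (Fin n) ℝ) (y : Fin m → ℝ) :
    Matrix.vecMul y (∑ i ∈ s, A i) = ∑ i ∈ s, Matrix.vecMul y (A i) := by
  funext j
  simp only [Matrix.vecMul, dotProduct, Matrix.sum_apply, Finset.sum_apply, Finset.mul_sum]
  rw [Finset.sum_comm]

private lemma vecMulVec_mulVec' {m n : ℕ} (p : Fin m → ℝ) (q : Fin n → ℝ) (x : Fin n → ℝ) :
    (Matrix.vecMulVec p q).mulVec x = (q ⬝ᵥ x) • p := by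
  funext i
  simp [Matrix.mulVec, Matrix.vecMulVec, dotProduct, Finset.sum_mul, mul_assoc,
    mul_comm, mul_left_comm, Finset.mul_sum]

private lemma vecMul_vecMulVec' {m n : ℕ} (p : Fin m → ℝ) (q : Fin n → ℝ) (y : Fin m → ℝ) :
    Matrix.vecMul y (Matrix.vecMulVec p q) = (p ⬝ᵥ y) • q := by
  funext j
  simp [Matrix.vecMul, Matrix.vecMulVec, dotProduct, Finset.sum_mul, mul_assoc,
    mul_comm, mul_left_comm, Finset.mul_sum]

theorem stmt17 {m n k : ℕ}
    (u : Fin n → ℝ) (v : Fin m → ℝ) (a : Fin m → ℝ) (b : Fin n → ℝ)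
    (r : Fin k → Fin m → ℝ) (c : Fin k → Fin n → ℝ)
    (C : Matrix (Fin m) (Fin n) ℝ)
    (hM : Matrix.vecMulVec (1 : Fin m → ℝ) u + Matrix.vecMulVec v (1 : Fin n → ℝ)
      = Matrix.vecMulVec a b)
    (hMrank : (Matrix.vecMulVec a b).rank = 1)
    (hC : C = Matrix.vecMulVec a b + ∑ i : Fin k, Matrix.vecMulVec (r i) (c i))
    (hcols : LinearIndependent ℝ (Fin.cons a r))
    (hrows : LinearIndependent ℝ (Fin.cons b c)) :
    (∃ x : Fin n → ℝ, C.mulVec x = 1) ∨ (∃ y : Fin m → ℝ, C.vecMul y = 1) := by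
  have hMne : Matrix.vecMulVec a b ≠ 0 := by
    intro h
    rw [h, Matrix.rank_zero] at hMrank
    exact absurd hMrank (by norm_num)
  have hab : ∃ i j, a i * b j ≠ 0 := by
    by_contra h
    push_neg at h
    apply hMne
    ext i j
    simpa [Matrix.vecMulVec_apply] using h i j
  obtain ⟨i0, j0, h0⟩ := hab
  have ha0 : a i0 ≠ 0 := left_ne_zero_of_mul h0
  have hb0 : b j0 ≠ 0 := right_ne_zero_of_mul h0
  have hentry : ∀ i j, u j + v i = a i * b j := by
    intro i j
    simpa [Matrix.vecMulVec_apply, Matrix.add_apply] using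
      congrFun (congrFun hM i) j
  by_cases hu : ∀ j1 j2 : Fin n, u j1 = u j2
  · -- u constant ⇒ b constant ⇒ 1ₙ in row space
    have hbconst : ∀ j, b j = b j0 := by
      intro j
      have h1 := hentry i0 j
      have h2 := hentry i0 j0
      have h3 : a i0 * b j = a i0 * b j0 := by rw [← h1, ← h2, hu j j0]
      exact mul_left_cancel₀ ha0 h3
    right
    obtain ⟨y, hy⟩ := exists_dual' (Fin.cons a r) hcols (Fin.cons (b j0)⁻¹ 0)
    refine ⟨y, ?_⟩
    have h1 : a ⬝ᵥ y = (b j0)⁻¹ := by simpa using hy 0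
    have h2 : ∀ i, r i ⬝ᵥ y = 0 := fun i => by simpa using hy i.succ
    rw [hC, Matrix.vecMul_add, sum_vecMul', vecMul_vecMulVec', h1]
    have hz : ∑ i : Fin k, Matrix.vecMul y (Matrix.vecMulVec (r i) (c i)) = 0 := by
      apply Finset.sum_eq_zero
      intro i _
      rw [vecMul_vecMulVec', h2 i, zero_smul]
    rw [hz, add_zero]
    funext j
    simp [hbconst j, Pi.smul_apply, smul_eq_mul, inv_mul_cancel₀ hb0]
  · -- u nonconstant ⇒ a constant ⇒ 1ₘ in column space
    push_neg at hu
    obtain ⟨j1, j2, hj⟩ := hu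
    have haconst : ∀ i, a i = a i0 := by
      intro i
      have e1 := hentry i j1
      have e2 := hentry i j2
      have e3 := hentry i0 j1
      have e4 := hentry i0 j2
      have d1 : a i * (b j1 - b j2) = u j1 - u j2 := by ring_nf; nlinarith [e1, e2]
      have d2 : a i0 * (b j1 - b j2) = u j1 - u j2 := by ring_nf; nlinarith [e3, e4]
      have hbne : b j1 - b j2 ≠ 0 := by
        intro h
        rw [h, mul_zero] at d2
        exact hj (by linarith)
      have : a i * (b j1 - b j2) = a i0 * (b j1 - b j2) := by rw [d1, d2]
      exact mul_right_cancel₀ hbne this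
    left
    obtain ⟨x, hx⟩ := exists_dual' (Fin.cons b c) hrows (Fin.cons (a i0)⁻¹ 0)
    refine ⟨x, ?_⟩
    have h1 : b ⬝ᵥ x = (a i0)⁻¹ := by simpa using hx 0
    have h2 : ∀ i, c i ⬝ᵥ x = 0 := fun i => by simpa using hx i.succ
    rw [hC, Matrix.add_mulVec, sum_mulVec', vecMulVec_mulVec', h1]
    have hz : ∑ i : Fin k, (Matrix.vecMulVec (r i) (c i)).mulVec x = 0 := by
      apply Finset.sum_eq_zero
      intro i _
      rw [vecMulVec_mulVec', h2 i, zero_smul]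
    rw [hz, add_zero]
    funext i
    simp [haconst i, Pi.smul_apply, smul_eq_mul, inv_mul_cancel₀ ha0]
end
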